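/- Let $V$ be a complex vector space with basis $\{e_i\}_{i \in I}$ and fix $d \ge 3$. Let $f$ be the diagonal symmetric $d$-form with $f(\sum_i x_i e_i) = \sum_i x_i^d$. Then the group of linear automorphisms $g \in \mathbf{GL}(V)$ satisfying $f(g v) = f(v)$ for all $v$ is exactly the wreath product $\mu_d \wr \mathfrak{S}_I$: every such $g$ permutes the basis vectors up to multiplication by $d$-th roots of unity, and conversely every such transformation preserves $f$. -/
import Mathlib


/-- The diagonal degree-`d` form `f(∑ xᵢ eᵢ) = ∑ xᵢ^d` on the free vector space on `I`. -/
noncomputable def diagForm {I : Type*} (d : ℕ) (v : I →₀ ℂ) : ℂ :=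
  ∑ i ∈ v.support, (v i) ^ d

open Polynomial in
private lemma coeff_two_pow (a b : ℂ) {d : ℕ} (hd : 2 ≤ d) :
    ((C a + C b * X) ^ d).coeff 2 = (d.choose 2 : ℂ) * (a ^ (d - 2) * b ^ 2) := by
  rw [add_pow, Polynomial.finset_sum_coeff]
  rw [Finset.sum_eq_single (d - 2)]
  · have h2 : d - (d - 2) = 2 := by omega
    rw [h2]
    have hc : d.choose (d - 2) = d.choose 2 := by
      rw [← Nat.choose_symm (by omega : d - 2 ≤ d), h2]
    rw [hc, mul_pow, ← C_pow, ← C_pow]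
    rw [show C (a ^ (d-2)) * (C (b^2) * X ^ 2) * (d.choose 2 : ℂ[X])
        = C (a ^ (d-2) * b ^ 2 * (d.choose 2 : ℂ)) * X ^ 2 by
      rw [← C_eq_natCast]; rw [C_mul, C_mul]; ring]
    rw [coeff_C_mul, coeff_X_pow]
    simp [mul_comm, mul_assoc, mul_left_comm]
  · intro k hk hne
    have hm : d - k ≠ 2 := by
      simp only [Finset.mem_range] at hk; omega
    rw [mul_pow, ← C_pow, ← C_pow]
    rw [show C (a ^ k) * (C (b^(d-k)) * X ^ (d-k)) * (d.choose k : ℂ[X])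
        = C (a ^ k * b ^ (d-k) * (d.choose k : ℂ)) * X ^ (d-k) by
      rw [← C_eq_natCast]; rw [C_mul, C_mul]; ring]
    rw [coeff_C_mul, coeff_X_pow, if_neg (fun h => hm h.symm), mul_zero]
  · intro h
    exact absurd (Finset.mem_range.mpr (by omega)) h

open Polynomial in
private lemma sum_pow_coeff2{J K : Type*} {d : ℕ} (hd : 3 ≤ d) {s : Finset J} {t : Finset K}
    {a b : J → ℂ} {a' b' : K → ℂ}
    (h : ∀ x : ℂ, ∑ j ∈ s, (a j + x * b j) ^ d = ∑ j ∈ t, (a' j + x * b' j) ^ d) :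
    ∑ j ∈ s, (a j) ^ (d - 2) * (b j) ^ 2 = ∑ j ∈ t, (a' j) ^ (d - 2) * (b' j) ^ 2 := by
  have hP : (∑ j ∈ s, (C (a j) + C (b j) * X) ^ d)
      = ∑ j ∈ t, (C (a' j) + C (b' j) * X) ^ d := by
    apply Polynomial.funext
    intro x
    rw [eval_finset_sum, eval_finset_sum]
    simp only [eval_pow, eval_add, eval_mul, eval_C, eval_X]
    simpa [mul_comm] using h x
  have := congrArg (fun P : ℂ[X] => P.coeff 2) hP
  simp only [Polynomial.finset_sum_coeff] at this
  rw [Finset.sum_congr rfl (fun j _ => coeff_two_pow (a j) (b j) (by omega)),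
      Finset.sum_congr rfl (fun j _ => coeff_two_pow (a' j) (b' j) (by omega)),
      ← Finset.mul_sum, ← Finset.mul_sum] at this
  have hc : (d.choose 2 : ℂ) ≠ 0 := by
    exact Nat.cast_ne_zero.mpr (Nat.choose_pos (by omega : 2 ≤ d)).ne'
  exact mul_left_cancel₀ hc this

private lemma diagForm_sum_subset {I : Type*} {d : ℕ} (hd : d ≠ 0) (v : I →₀ ℂ) {s : Finset I}
    (hs : v.support ⊆ s) : diagForm d v = ∑ i ∈ s, (v i) ^ d := by
  refine Finset.sum_subset hs fun i _ hi => ?_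
  rw [Finsupp.notMem_support_iff.mp hi, zero_pow hd]

private lemma diagForm_single {I : Type*} {d : ℕ} (hd : d ≠ 0) (j : I) (a : ℂ) :
    diagForm d (Finsupp.single j a) = a ^ d := by
  rcases eq_or_ne a 0 with rfl | ha
  · simp [diagForm, zero_pow hd]
  · rw [diagForm, Finsupp.support_single_ne_zero _ ha, Finset.sum_singleton,
      Finsupp.single_eq_same]

private lemma key_Q {I : Type*} {d : ℕ} (hd : 3 ≤ d) (g : (I →₀ ℂ) ≃ₗ[ℂ] (I →₀ ℂ))
    (h : ∀ v : I →₀ ℂ, diagForm d (g v) = diagForm d v) (i : I) (q : I →₀ ℂ) :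
    ∑ j ∈ (g (Finsupp.single i 1)).support,
      ((g (Finsupp.single i 1)) j) ^ (d - 2) * ((g q) j) ^ 2 = (q i) ^ 2 := by
  classical
  have hd0 : d ≠ 0 := by omega
  have hd2 : d - 2 ≠ 0 := by omega
  set u := g (Finsupp.single i 1) with hu
  have key : ∀ x : ℂ,
      ∑ j ∈ u.support ∪ (g q).support, (u j + x * (g q) j) ^ d
        = ∑ j ∈ (Finsupp.single i (1:ℂ)).support ∪ q.support,
            ((Finsupp.single i (1:ℂ)) j + x * q j) ^ d := by
    intro x
    have h1 := h (Finsupp.single i 1 + x • q)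
    rw [map_add, map_smul] at h1
    rw [diagForm_sum_subset hd0 _ (s := u.support ∪ (g q).support) ?hs1,
        diagForm_sum_subset hd0 _ (s := (Finsupp.single i (1:ℂ)).support ∪ q.support) ?hs2] at h1
    · simpa [Finsupp.add_apply, Finsupp.smul_apply, smul_eq_mul] using h1
    case hs1 =>
      refine (Finsupp.support_add).trans ?_
      exact Finset.union_subset_union le_rfl (Finsupp.support_smul)
    case hs2 =>
      refine (Finsupp.support_add).trans ?_
      exact Finset.union_subset_union le_rfl (Finsupp.support_smul)
  have h2 := sum_pow_coeff2 hd key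
  have hmem : i ∈ (Finsupp.single i (1:ℂ)).support ∪ q.support := by
    exact Finset.mem_union_left _ (by simp [Finsupp.support_single_ne_zero])
  have hrhs : (∑ j ∈ (Finsupp.single i (1:ℂ)).support ∪ q.support,
      ((Finsupp.single i (1:ℂ)) j) ^ (d - 2) * q j ^ 2) = q i ^ 2 := by
    rw [Finset.sum_eq_single_of_mem i hmem ?van, Finsupp.single_eq_same, one_pow, one_mul]
    case van =>
      intro j _ hj
      rw [Finsupp.single_apply, if_neg (fun hh => hj hh.symm), zero_pow hd2, zero_mul]
  rw [hrhs] at h2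
  rw [← h2]
  refine Finset.sum_subset Finset.subset_union_left fun j _ hj => ?_
  rw [Finsupp.notMem_support_iff.mp hj, zero_pow hd2, zero_mul]

private lemma core {I : Type*} {d : ℕ} (hd : 3 ≤ d) (g : (I →₀ ℂ) ≃ₗ[ℂ] (I →₀ ℂ))
    (h : ∀ v : I →₀ ℂ, diagForm d (g v) = diagForm d v) (i : I) :
    ∃ (j : I) (c : ℂ), c ≠ 0 ∧ g (Finsupp.single i 1) = c • Finsupp.single j 1 := by
  classical
  have hd2 : d - 2 ≠ 0 := by omega
  set u := g (Finsupp.single i 1) with hu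
  have hQ := key_Q hd g h i
  -- bilinear form
  have hB : ∀ w w' : I →₀ ℂ,
      ∑ j ∈ u.support, (u j) ^ (d - 2) * ((g w) j * (g w') j) = w i * w' i := by
    intro w w'
    have h1 := hQ (w + w')
    have h2 := hQ w
    have h3 := hQ w'
    simp only [map_add, Finsupp.add_apply] at h1
    rw [Finset.sum_congr rfl (fun j _ => show
        (u j) ^ (d-2) * ((g w) j + (g w') j) ^ 2
          = (u j) ^ (d-2) * ((g w) j) ^ 2 + 2 * ((u j) ^ (d-2) * ((g w) j * (g w') j))
            + (u j) ^ (d-2) * ((g w') j) ^ 2 from by ring),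
      Finset.sum_add_distrib, Finset.sum_add_distrib, ← Finset.mul_sum] at h1
    linear_combination (h1 - h2 - h3) / 2
  have hrec : ∀ j ∈ u.support, ∀ w' : I →₀ ℂ,
      (u j) ^ (d - 2) * (g w') j = (g.symm (Finsupp.single j 1)) i * w' i := by
    intro j hj w'
    have hb := hB (g.symm (Finsupp.single j 1)) w'
    rw [g.apply_symm_apply] at hb
    rw [Finset.sum_eq_single_of_mem j hj (fun j' _ hj' => by
      rw [Finsupp.single_apply, if_neg (fun hh => hj' hh.symm), zero_mul, mul_zero])] at hb
    rwa [Finsupp.single_eq_same, one_mul] at hb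
  have hsub : ∀ j₁ ∈ u.support, ∀ j₂ ∈ u.support, j₁ = j₂ := by
    intro j₁ h1 j₂ h2
    by_contra hne
    set w₁ := g.symm (Finsupp.single j₁ 1) with hw₁
    have e1 := hrec j₁ h1 w₁
    rw [hw₁, g.apply_symm_apply, Finsupp.single_eq_same] at e1
    have hw₁i : w₁ i ≠ 0 := by
      intro h0
      rw [← hw₁, h0, mul_zero, mul_one] at e1
      exact pow_ne_zero _ (Finsupp.mem_support_iff.mp h1) e1
    have e2 := hrec j₂ h2 w₁
    rw [hw₁, g.apply_symm_apply, Finsupp.single_apply, if_neg (fun hh => hne hh),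
      mul_zero] at e2
    have hc2 : (g.symm (Finsupp.single j₂ 1)) i = 0 :=
      (mul_eq_zero.mp e2.symm).resolve_right (by rw [← hw₁] at *; exact hw₁i)
    have e3 := hrec j₂ h2 (g.symm (Finsupp.single j₂ 1))
    rw [g.apply_symm_apply, Finsupp.single_eq_same, mul_one, hc2, zero_mul] at e3
    exact pow_ne_zero _ (Finsupp.mem_support_iff.mp h2) e3
  have hu0 : u ≠ 0 := by
    intro h0
    have : (Finsupp.single i (1:ℂ)) = 0 := by
      have := congrArg g.symm h0
      rwa [hu, g.symm_apply_apply, map_zero] at this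
    simpa using congrFun (congrArg DFunLike.coe this) i
  obtain ⟨j, hj⟩ := Finsupp.support_nonempty_iff.mpr hu0
  have hsupp : u.support = {j} :=
    Finset.eq_singleton_iff_unique_mem.mpr ⟨hj, fun x hx => hsub x hx j hj⟩
  obtain ⟨hne, heq⟩ := Finsupp.support_eq_singleton.mp hsupp
  exact ⟨j, u j, hne, by rw [Finsupp.smul_single, smul_eq_mul, mul_one]; exact heq⟩

/-- for `d ≥ 3`, the group of linear automorphisms preserving the diagonal
form `f` is exactly the wreath product `μ_d ≀ 𝔖_I`: `g` preserves `f` iff `g` sends each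
basis vector `e_i` to `ζ_i e_{σ(i)}` for a permutation `σ` and `d`-th roots of unity `ζ_i`. -/
theorem stmt1 {I : Type*} (d : ℕ) (hd : 3 ≤ d) (g : (I →₀ ℂ) ≃ₗ[ℂ] (I →₀ ℂ)) :
    (∀ v : I →₀ ℂ, diagForm d (g v) = diagForm d v) ↔
    (∃ (σ : Equiv.Perm I) (ζ : I → ℂ), (∀ i, ζ i ^ d = 1) ∧
      ∀ i, g (Finsupp.single i 1) = ζ i • Finsupp.single (σ i) 1) := by
  classical
  have hd0 : d ≠ 0 := by omega
  constructor
  · intro h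
    have hsymm : ∀ v : I →₀ ℂ, diagForm d (g.symm v) = diagForm d v := by
      intro v
      have := h (g.symm v)
      rw [g.apply_symm_apply] at this
      exact this.symm
    choose F c hc0 hgc using core hd g h
    choose G c' hc0' hgc' using core hd g.symm hsymm
    have hGF : ∀ i, G (F i) = i := by
      intro i
      by_contra hne
      have e : g.symm (g (Finsupp.single i 1)) = Finsupp.single i 1 := g.symm_apply_apply _
      rw [hgc i, map_smul, hgc' (F i), smul_smul] at e
      have := congrFun (congrArg DFunLike.coe e) i
      simp [Finsupp.single_apply, hne] at this
    have hFG : ∀ j, F (G j) = j := by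
      intro j
      by_contra hne
      have e : g (g.symm (Finsupp.single j 1)) = Finsupp.single j 1 := g.apply_symm_apply _
      rw [hgc' j, map_smul, hgc (G j), smul_smul] at e
      have := congrFun (congrArg DFunLike.coe e) j
      simp [Finsupp.single_apply, hne] at this
    refine ⟨⟨F, G, hGF, hFG⟩, c, fun i => ?_, fun i => ?_⟩
    · have := h (Finsupp.single i 1)
      rw [hgc i, Finsupp.smul_single, smul_eq_mul, mul_one, diagForm_single hd0,
        diagForm_single hd0, one_pow] at this
      exact this
    · exact hgc i
  · rintro ⟨σ, ζ, hζ, hg⟩ v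
    have hζ0 : ∀ i, ζ i ≠ 0 := fun i h0 => by
      have := hζ i; rw [h0, zero_pow hd0] at this; exact zero_ne_one this
    have hv : g v = ∑ i ∈ v.support, Finsupp.single (σ i) (ζ i * v i) := by
      conv_lhs => rw [← Finsupp.sum_single v]
      rw [Finsupp.sum, map_sum]
      refine Finset.sum_congr rfl fun i _ => ?_
      rw [show Finsupp.single i (v i) = (v i) • Finsupp.single i 1 from by
        rw [Finsupp.smul_single, smul_eq_mul, mul_one], map_smul, hg i, smul_smul,
        Finsupp.smul_single, smul_eq_mul, mul_one, mul_comm]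
    have happ : ∀ i, (g v) (σ i) = ζ i * v i := by
      intro i
      rw [hv, Finsupp.finset_sum_apply]
      rw [Finset.sum_eq_single i ?van ?off]
      · rw [Finsupp.single_eq_same]
      case van =>
        intro j _ hj
        rw [Finsupp.single_apply, if_neg (fun hh => hj (σ.injective hh))]
      case off =>
        intro hi
        rw [Finsupp.notMem_support_iff.mp hi, mul_zero, Finsupp.single_zero,
          Finsupp.coe_zero, Pi.zero_apply]
    have hsupp : (g v).support ⊆ v.support.image σ := by
      intro j hj
      rw [hv] at hj
      have := Finsupp.mem_support_iff.mp hj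
      by_contra hnot
      apply this
      rw [Finsupp.finset_sum_apply]
      refine Finset.sum_eq_zero fun k hk => ?_
      rw [Finsupp.single_apply, if_neg]
      intro hh
      exact hnot (Finset.mem_image.mpr ⟨k, hk, hh⟩)
    rw [diagForm_sum_subset hd0 _ hsupp, Finset.sum_image (fun a _ b _ hab => σ.injective hab)]
    rw [diagForm]
    refine Finset.sum_congr rfl fun i _ => ?_
    rw [happ i, mul_pow, hζ i, one_mul]
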